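/- For all real numbers p ≥ 0 and q ≥ 0, the improper integral ∫₀^∞ (exp(−p·y) − exp(−q·y))·y^(−3/2) dy converges and equals 2·√π·(√q − √p). -/

import Mathlib

open MeasureTheory Real Set Filter Topology

private lemma keyVal' {a : ℝ} (ha : 0 < a) :
    ∫ y in Ioi (0:ℝ), a * Real.exp (-a * y) * y ^ (-(1:ℝ)/2) = Real.sqrt Real.pi * Real.sqrt a := by
  have h := Real.integral_rpow_mul_exp_neg_mul_Ioi (a := 1/2) (r := a) (by norm_num) ha
  rw [Real.Gamma_one_half_eq] at h
  have h2 : ∫ y in Ioi (0:ℝ), a * Real.exp (-a * y) * y ^ (-(1:ℝ)/2)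
      = a * ∫ t in Ioi (0:ℝ), t ^ ((1:ℝ)/2 - 1) * Real.exp (-(a * t)) := by
    rw [← integral_const_mul]
    refine setIntegral_congr_fun measurableSet_Ioi (fun y hy => ?_)
    rw [neg_mul]; norm_num; ring
  rw [h2, h, ← Real.sqrt_eq_rpow, one_div, Real.sqrt_inv, ← mul_assoc,
    ← div_eq_mul_inv, Real.div_sqrt]
  ring

private lemma keyVal {a : ℝ} (ha : 0 ≤ a) :
    ∫ y in Ioi (0:ℝ), a * Real.exp (-a * y) * y ^ (-(1:ℝ)/2) = Real.sqrt Real.pi * Real.sqrt a := by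
  rcases ha.eq_or_lt with rfl | ha
  · simp
  · exact keyVal' ha

private lemma keyInt {a : ℝ} (ha : 0 ≤ a) :
    IntegrableOn (fun y : ℝ => a * Real.exp (-a * y) * y ^ (-(1:ℝ)/2)) (Ioi (0:ℝ)) := by
  rcases ha.eq_or_lt with rfl | ha
  · simp [integrableOn_zero]
  · have h := integrableOn_rpow_mul_exp_neg_mul_rpow
      (by norm_num : (-1:ℝ) < -(1:ℝ)/2) (by norm_num : (0:ℝ) < 1) ha
    have h2 : IntegrableOn
        (fun x : ℝ => a * (x ^ (-(1:ℝ)/2) * Real.exp (-a * x ^ (1:ℝ)))) (Ioi (0:ℝ)) :=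
      h.const_mul a
    refine h2.congr_fun (fun y hy => ?_) measurableSet_Ioi
    dsimp only; rw [Real.rpow_one]; ring

private lemma exp_diff_bound {p q y : ℝ} (hp : 0 ≤ p) (hq : 0 ≤ q) (hy : 0 ≤ y) :
    |Real.exp (-p * y) - Real.exp (-q * y)| ≤ (p + q) * y := by
  have key : ∀ a : ℝ, 0 ≤ a → |Real.exp (-a * y) - 1| ≤ a * y := by
    intro a ha
    have h1 : Real.exp (-a * y) ≤ 1 := Real.exp_le_one_iff.2 (by nlinarith)
    have h2 : 1 - a * y ≤ Real.exp (-a * y) := by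
      have := Real.add_one_le_exp (-a * y); linarith
    rw [abs_sub_comm, abs_of_nonneg (by linarith)]; linarith
  calc |Real.exp (-p * y) - Real.exp (-q * y)|
      ≤ |Real.exp (-p * y) - 1| + |1 - Real.exp (-q * y)| := by
        have := abs_sub_abs_le_abs_sub (Real.exp (-p*y)) (Real.exp (-q*y))
        calc _ = |(Real.exp (-p * y) - 1) + (1 - Real.exp (-q * y))| := by ring_nf
        _ ≤ _ := abs_add_le _ _
    _ ≤ p * y + q * y := add_le_add (key p hp) (by rw [abs_sub_comm]; exact key q hq)
    _ = (p + q) * y := by ring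

theorem laplace_integral_corrected (p q : ℝ) (hp : 0 ≤ p) (hq : 0 ≤ q) :
    IntegrableOn
      (fun y : ℝ => (Real.exp (-p * y) - Real.exp (-q * y)) * y ^ (-(3 : ℝ) / 2))
      (Ioi (0 : ℝ)) ∧
    ∫ y in Ioi (0 : ℝ), (Real.exp (-p * y) - Real.exp (-q * y)) * y ^ (-(3 : ℝ) / 2)
      = 2 * Real.sqrt Real.pi * (Real.sqrt q - Real.sqrt p) := by
  set g : ℝ → ℝ := fun y => (Real.exp (-p * y) - Real.exp (-q * y)) * y ^ (-(3 : ℝ) / 2) with hg_def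
  -- continuity / measurability of g on Ioi 0
  have hg_cont : ContinuousOn g (Ioi (0:ℝ)) := by
    refine ContinuousOn.mul (by fun_prop) ?_
    intro y hy
    exact (Real.continuousAt_rpow_const y _ (Or.inl (ne_of_gt hy))).continuousWithinAt
  -- integrability of g
  have hg_int : IntegrableOn g (Ioi (0:ℝ)) := by
    have h1 : IntegrableOn g (Ioc (0:ℝ) 1) := by
      have hbound : IntegrableOn (fun y : ℝ => (p + q) * y ^ (-(1:ℝ)/2)) (Ioc (0:ℝ) 1) := by
        have := intervalIntegral.intervalIntegrable_rpow' (a := 0) (b := 1)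
          (by norm_num : (-1:ℝ) < -(1:ℝ)/2)
        rw [intervalIntegrable_iff, uIoc_of_le zero_le_one] at this
        exact this.const_mul _
      refine hbound.mono' ((hg_cont.mono Ioc_subset_Ioi_self).aestronglyMeasurable measurableSet_Ioc) ?_
      filter_upwards [ae_restrict_mem measurableSet_Ioc] with y hy
      have hy0 : 0 < y := hy.1
      have hb := exp_diff_bound hp hq hy0.le
      have hrp : (0:ℝ) < y ^ (-(3:ℝ)/2) := Real.rpow_pos_of_pos hy0 _
      calc ‖g y‖ = |Real.exp (-p * y) - Real.exp (-q * y)| * y ^ (-(3:ℝ)/2) := by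
            rw [hg_def]; simp [abs_mul, abs_of_pos hrp]
        _ ≤ ((p + q) * y) * y ^ (-(3:ℝ)/2) := by
            exact mul_le_mul_of_nonneg_right hb hrp.le
        _ = (p + q) * y ^ (-(1:ℝ)/2) := by
            rw [mul_assoc]
            congr 1
            rw [show (-(1:ℝ)/2) = 1 + -(3:ℝ)/2 by norm_num, Real.rpow_add hy0, Real.rpow_one]
    have h2 : IntegrableOn g (Ioi (1:ℝ)) := by
      have hbound : IntegrableOn (fun y : ℝ => 2 * y ^ (-(3:ℝ)/2)) (Ioi (1:ℝ)) :=
        (integrableOn_Ioi_rpow_of_lt (by norm_num) one_pos).const_mul 2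
      refine hbound.mono' ((hg_cont.mono (Ioi_subset_Ioi zero_le_one)).aestronglyMeasurable measurableSet_Ioi) ?_
      filter_upwards [ae_restrict_mem measurableSet_Ioi] with y hy
      have hy0 : (0:ℝ) < y := lt_trans one_pos hy
      have hrp : (0:ℝ) < y ^ (-(3:ℝ)/2) := Real.rpow_pos_of_pos hy0 _
      have he1 : Real.exp (-p * y) ≤ 1 := Real.exp_le_one_iff.2 (by nlinarith)
      have he2 : Real.exp (-q * y) ≤ 1 := Real.exp_le_one_iff.2 (by nlinarith)
      have he3 : (0:ℝ) < Real.exp (-p * y) := Real.exp_pos _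
      have he4 : (0:ℝ) < Real.exp (-q * y) := Real.exp_pos _
      calc ‖g y‖ = |Real.exp (-p * y) - Real.exp (-q * y)| * y ^ (-(3:ℝ)/2) := by
            rw [hg_def]; simp [abs_mul, abs_of_pos hrp]
        _ ≤ 2 * y ^ (-(3:ℝ)/2) := by
            refine mul_le_mul_of_nonneg_right ?_ hrp.le
            rw [abs_sub_le_iff]; constructor <;> linarith
    have := h1.union h2
    rwa [Ioc_union_Ioi_eq_Ioi zero_le_one] at this
  refine ⟨hg_int, ?_⟩
  -- the correction term h
  set h : ℝ → ℝ := fun y => 2 * (p * Real.exp (-p * y) * y ^ (-(1:ℝ)/2))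
      - 2 * (q * Real.exp (-q * y) * y ^ (-(1:ℝ)/2)) with hh_def
  have hh_int : IntegrableOn h (Ioi (0:ℝ)) :=
    ((keyInt hp).const_mul 2).sub ((keyInt hq).const_mul 2)
  have hh_val : ∫ y in Ioi (0:ℝ), h y
      = 2 * Real.sqrt Real.pi * Real.sqrt p - 2 * Real.sqrt Real.pi * Real.sqrt q := by
    rw [integral_sub (((keyInt hp).const_mul 2)) (((keyInt hq).const_mul 2)),
      integral_const_mul, integral_const_mul, keyVal hp, keyVal hq]
    ring
  -- the boundary function F
  set F : ℝ → ℝ := fun y => if 0 < y then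
      -2 * y ^ (-(1:ℝ)/2) * (Real.exp (-p * y) - Real.exp (-q * y)) else 0 with hF_def
  -- derivative
  have hF_deriv : ∀ y ∈ Ioi (0:ℝ), HasDerivAt F (g y + h y) y := by
    intro y hy
    have hy0 : (0:ℝ) < y := hy
    have hrw : HasDerivAt (fun y : ℝ => -2 * y ^ (-(1:ℝ)/2) * (Real.exp (-p * y) - Real.exp (-q * y)))
        (g y + h y) y := by
      have d1 : HasDerivAt (fun y : ℝ => y ^ (-(1:ℝ)/2)) ((-(1:ℝ)/2) * y ^ (-(3:ℝ)/2)) y := by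
        have := Real.hasDerivAt_rpow_const (p := -(1:ℝ)/2) (Or.inl (ne_of_gt hy0))
        convert this using 2
        norm_num
      have d2 : HasDerivAt (fun y : ℝ => Real.exp (-p * y) - Real.exp (-q * y))
          ((-p) * Real.exp (-p * y) - (-q) * Real.exp (-q * y)) y := by
        have e1 : HasDerivAt (fun y : ℝ => Real.exp (-p * y)) ((-p) * Real.exp (-p * y)) y := by
          simpa [mul_comm] using ((hasDerivAt_id y).const_mul (-p)).exp
        have e2 : HasDerivAt (fun y : ℝ => Real.exp (-q * y)) ((-q) * Real.exp (-q * y)) y := by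
          simpa [mul_comm] using ((hasDerivAt_id y).const_mul (-q)).exp
        exact e1.sub e2
      have : HasDerivAt (fun y : ℝ => -2 * y ^ (-(1:ℝ)/2) * (Real.exp (-p * y) - Real.exp (-q * y))) _ y :=
        ((d1.const_mul (-2)).mul d2)
      convert this using 1
      simp only [hg_def, hh_def]
      have hsplit : y ^ (-(3:ℝ)/2) = y ^ (-(1:ℝ)/2) * y⁻¹ := by
        rw [← Real.rpow_neg_one y, ← Real.rpow_add hy0]; norm_num
      have hsplit2 : y ^ (-(1:ℝ)/2) = y ^ (-(3:ℝ)/2) * y := by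
        rw [hsplit, mul_assoc, inv_mul_cancel₀ (ne_of_gt hy0), mul_one]
      rw [hsplit2]
      ring
    refine hrw.congr_of_eventuallyEq ?_
    filter_upwards [eventually_gt_nhds hy0] with z hz
    rw [hF_def]; simp [hz]
  -- continuity at 0
  have hF_cont : ContinuousWithinAt F (Ici (0:ℝ)) 0 := by
    have hF0 : F 0 = 0 := by rw [hF_def]; simp
    rw [ContinuousWithinAt, hF0]
    have hbnd : ∀ y ∈ Ici (0:ℝ), ‖F y‖ ≤ 2 * (p + q) * Real.sqrt y := by
      intro y hy
      rcases eq_or_lt_of_le (mem_Ici.1 hy) with rfl | hy0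
      · simp [hF_def]
      · have hb := exp_diff_bound hp hq hy0.le
        have hrp : (0:ℝ) < y ^ (-(1:ℝ)/2) := Real.rpow_pos_of_pos hy0 _
        have : ‖F y‖ = 2 * y ^ (-(1:ℝ)/2) * |Real.exp (-p * y) - Real.exp (-q * y)| := by
          rw [hF_def]; simp only [hy0, if_true]
          rw [norm_eq_abs, abs_mul, abs_mul, abs_of_pos hrp]
          norm_num
        rw [this]
        calc 2 * y ^ (-(1:ℝ)/2) * |Real.exp (-p * y) - Real.exp (-q * y)|
            ≤ 2 * y ^ (-(1:ℝ)/2) * ((p + q) * y) :=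
              mul_le_mul_of_nonneg_left hb (by positivity)
          _ = 2 * (p + q) * (y ^ (-(1:ℝ)/2) * y) := by ring
          _ = 2 * (p + q) * Real.sqrt y := by
              rw [Real.sqrt_eq_rpow]
              congr 1
              rw [show (1/(2:ℝ)) = -(1:ℝ)/2 + 1 by norm_num, Real.rpow_add hy0, Real.rpow_one]
    have htend : Tendsto (fun y : ℝ => 2 * (p + q) * Real.sqrt y) (𝓝[Ici (0:ℝ)] 0) (𝓝 0) := by
      have : Tendsto (fun y : ℝ => 2 * (p + q) * Real.sqrt y) (𝓝 0) (𝓝 (2 * (p+q) * Real.sqrt 0)) :=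
        ((continuous_const.mul Real.continuous_sqrt).tendsto 0)
      simpa using this.mono_left nhdsWithin_le_nhds
    exact squeeze_zero_norm' (Filter.eventually_of_mem self_mem_nhdsWithin hbnd) htend
  -- limit at infinity
  have hF_top : Tendsto F atTop (𝓝 0) := by
    have htend : Tendsto (fun y : ℝ => 4 * y ^ (-(1:ℝ)/2)) atTop (𝓝 0) := by
      have h0 := tendsto_rpow_neg_atTop (by norm_num : (0:ℝ) < 1/2)
      have h4 : Tendsto (fun y : ℝ => 4 * y ^ (-((1:ℝ)/2))) atTop (𝓝 (4 * 0)) :=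
        h0.const_mul 4
      simpa [neg_div] using h4
    refine squeeze_zero_norm' ?_ htend
    filter_upwards [eventually_gt_atTop (0:ℝ)] with y hy0
    show ‖F y‖ ≤ 4 * y ^ (-(1:ℝ)/2)
    have hrp : (0:ℝ) < y ^ (-(1:ℝ)/2) := Real.rpow_pos_of_pos hy0 _
    have he1 : Real.exp (-p * y) ≤ 1 := Real.exp_le_one_iff.2 (by nlinarith)
    have he2 : Real.exp (-q * y) ≤ 1 := Real.exp_le_one_iff.2 (by nlinarith)
    have he3 : (0:ℝ) < Real.exp (-p * y) := Real.exp_pos _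
    have he4 : (0:ℝ) < Real.exp (-q * y) := Real.exp_pos _
    have : ‖F y‖ = 2 * y ^ (-(1:ℝ)/2) * |Real.exp (-p * y) - Real.exp (-q * y)| := by
      rw [hF_def]; simp only [hy0, if_true]
      rw [norm_eq_abs, abs_mul, abs_mul, abs_of_pos hrp]
      norm_num
    rw [this]
    have habs : |Real.exp (-p * y) - Real.exp (-q * y)| ≤ 2 := by
      rw [abs_sub_le_iff]; constructor <;> linarith
    nlinarith
  -- FTC
  have hsum_int : IntegrableOn (fun y => g y + h y) (Ioi (0:ℝ)) := hg_int.add hh_int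
  have hFTC := integral_Ioi_of_hasDerivAt_of_tendsto hF_cont hF_deriv hsum_int hF_top
  have hF0 : F 0 = 0 := by rw [hF_def]; simp
  rw [hF0, sub_zero] at hFTC
  have hsum : (∫ y in Ioi (0:ℝ), g y) + ∫ y in Ioi (0:ℝ), h y = 0 := by
    rw [← integral_add hg_int hh_int]; exact hFTC
  have : ∫ y in Ioi (0:ℝ), g y = - ∫ y in Ioi (0:ℝ), h y := by linarith
  rw [show (fun y : ℝ => (Real.exp (-p * y) - Real.exp (-q * y)) * y ^ (-(3 : ℝ) / 2)) = g from rfl] at *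
  rw [this, hh_val]
  ring
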